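/- Let R = ℂ[x_1,…,x_n] and let I_1, I_2 ⊆ R be ideals. Then the Macaulay dual space of the intersection is the sum of the dual spaces: D_0[I_1 ∩ I_2] = D_0[I_1] + D_0[I_2] as ℂ-subspaces of R. -/

import Mathlib

open MvPolynomial

noncomputable section

/-- Apolarity pairing `⟨q, f⟩ = ∑ α (coeff α q) * (coeff α f)`. -/
def apair {n : ℕ} (q f : MvPolynomial (Fin n) ℂ) : ℂ :=
  ∑ α ∈ q.support, q.coeff α * f.coeff α

lemma apair_eq_sum {n : ℕ} {q : MvPolynomial (Fin n) ℂ} {s : Finset (Fin n →₀ ℕ)}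
    (h : q.support ⊆ s) (f : MvPolynomial (Fin n) ℂ) :
    apair q f = ∑ α ∈ s, q.coeff α * f.coeff α :=
  Finset.sum_subset h (fun α _ hα => by
    rw [MvPolynomial.notMem_support_iff.mp hα, zero_mul])

/-- The Macaulay dual space `D_0[I]` of an ideal at the origin. -/
def dualSpace {n : ℕ} (I : Ideal (MvPolynomial (Fin n) ℂ)) :
    Submodule ℂ (MvPolynomial (Fin n) ℂ) where
  carrier := {q | ∀ f ∈ I, apair q f = 0}
  zero_mem' := by intro f hf; simp [apair]
  add_mem' := by
    intro a b ha hb f hf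
    have h : apair (a + b) f = apair a f + apair b f := by
      rw [apair_eq_sum (s := a.support ∪ b.support) MvPolynomial.support_add,
        apair_eq_sum (s := a.support ∪ b.support) Finset.subset_union_left,
        apair_eq_sum (s := a.support ∪ b.support) Finset.subset_union_right,
        ← Finset.sum_add_distrib]
      exact Finset.sum_congr rfl fun α _ => by rw [coeff_add, add_mul]
    rw [h, ha f hf, hb f hf, add_zero]
  smul_mem' := by
    intro c q hq f hf
    have h : apair (c • q) f = c * apair q f := by
      rw [apair_eq_sum (s := q.support) MvPolynomial.support_smul, apair, Finset.mul_sum]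
      exact Finset.sum_congr rfl fun α _ => by rw [coeff_smul, smul_eq_mul, mul_assoc]
    rw [h, hq f hf, mul_zero]

open scoped Classical in
/-- The contraction `g ∘ q`, realizing the action of `g` on differential functionals:
`coeff α (contract g q) = ∑ β, coeff β g * coeff (α + β) q`. -/
def contract {n : ℕ} (g q : MvPolynomial (Fin n) ℂ) : MvPolynomial (Fin n) ℂ :=
  ∑ β ∈ g.support, ∑ α ∈ q.support,
    if β ≤ α then monomial (α - β) (g.coeff β * q.coeff α) else 0

/-- The truncated dual space `D_0^k[I]`. -/
def truncDual {n : ℕ} (k : ℕ) (I : Ideal (MvPolynomial (Fin n) ℂ)) :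
    Submodule ℂ (MvPolynomial (Fin n) ℂ) where
  carrier := {q | q ∈ dualSpace I ∧ q.totalDegree ≤ k}
  zero_mem' := ⟨(dualSpace I).zero_mem, by simp⟩
  add_mem' := fun ha hb => ⟨(dualSpace I).add_mem ha.1 hb.1,
    le_trans (MvPolynomial.totalDegree_add _ _) (max_le ha.2 hb.2)⟩
  smul_mem' := fun c q hq => ⟨(dualSpace I).smul_mem c hq.1,
    le_trans (MvPolynomial.totalDegree_smul_le c q) hq.2⟩

section Aux

open Finset

variable {n : ℕ}

lemma apair_add_left (a b f : MvPolynomial (Fin n) ℂ) :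
    apair (a + b) f = apair a f + apair b f := by
  rw [apair_eq_sum (s := a.support ∪ b.support) MvPolynomial.support_add,
    apair_eq_sum (s := a.support ∪ b.support) Finset.subset_union_left,
    apair_eq_sum (s := a.support ∪ b.support) Finset.subset_union_right,
    ← Finset.sum_add_distrib]
  exact Finset.sum_congr rfl fun α _ => by rw [coeff_add, add_mul]

lemma apair_add_right (q f g : MvPolynomial (Fin n) ℂ) :
    apair q (f + g) = apair q f + apair q g := by
  unfold apair
  rw [← Finset.sum_add_distrib]
  exact Finset.sum_congr rfl fun α _ => by rw [coeff_add, mul_add]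

lemma apair_smul_right (q : MvPolynomial (Fin n) ℂ) (c : ℂ) (f : MvPolynomial (Fin n) ℂ) :
    apair q (c • f) = c * apair q f := by
  unfold apair
  rw [Finset.mul_sum]
  exact Finset.sum_congr rfl fun α _ => by rw [coeff_smul, smul_eq_mul]; ring

/-- `apair q` as a linear functional. -/
def apairL (q : MvPolynomial (Fin n) ℂ) : MvPolynomial (Fin n) ℂ →ₗ[ℂ] ℂ where
  toFun f := apair q f
  map_add' := apair_add_right q
  map_smul' c f := apair_smul_right q c f

lemma apair_monomial_one (q : MvPolynomial (Fin n) ℂ) (α : Fin n →₀ ℕ) :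
    apair q (monomial α 1) = coeff α q := by
  unfold apair
  rw [Finset.sum_eq_single α
    (fun β _ hβ => by rw [coeff_monomial, if_neg (fun h => hβ h.symm), mul_zero])
    (fun h => by rw [MvPolynomial.notMem_support_iff.mp h, zero_mul])]
  rw [coeff_monomial, if_pos rfl, mul_one]

/-- The maximal ideal at the origin. -/
def mId (n : ℕ) : Ideal (MvPolynomial (Fin n) ℂ) := Ideal.span (Set.range X)

lemma coeff_zero_of_mem_mId {b : MvPolynomial (Fin n) ℂ} (hb : b ∈ mId n) :
    coeff 0 b = 0 := by
  have h : mId n ≤ RingHom.ker (constantCoeff (R := ℂ) (σ := Fin n)) := by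
    rw [mId, Ideal.span_le]
    rintro _ ⟨i, rfl⟩
    simp [RingHom.mem_ker]
  have h2 := h hb
  rw [RingHom.mem_ker] at h2
  rw [← MvPolynomial.constantCoeff_eq]
  exact h2

lemma degsum (β γ : Fin n →₀ ℕ) :
    ((β + γ).sum fun _ e => e) = (β.sum fun _ e => e) + (γ.sum fun _ e => e) :=
  Finsupp.sum_add_index' (fun _ => rfl) (fun _ _ _ => rfl)

lemma one_le_deg {γ : Fin n →₀ ℕ} (h : γ ≠ 0) : 1 ≤ γ.sum fun _ e => e := by
  obtain ⟨i, hi⟩ : ∃ i, γ i ≠ 0 := by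
    by_contra hc
    push_neg at hc
    exact h (Finsupp.ext fun i => hc i)
  have : γ i ≤ γ.sum fun _ e => e :=
    Finset.single_le_sum (f := fun j => γ j) (fun _ _ => Nat.zero_le _)
      (Finsupp.mem_support_iff.mpr hi)
  omega

lemma coeff_eq_zero_of_mem_pow {k : ℕ} {f : MvPolynomial (Fin n) ℂ}
    (hf : f ∈ (mId n) ^ k) {α : Fin n →₀ ℕ} (hα : (α.sum fun _ e => e) < k) :
    coeff α f = 0 := by
  induction k generalizing f α with
  | zero => omega
  | succ k ih =>
    rw [pow_succ] at hf
    refine Submodule.mul_induction_on (C := fun f =>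
        ∀ α : Fin n →₀ ℕ, (α.sum fun _ e => e) < k + 1 → coeff α f = 0) hf ?_ ?_ α hα
    · intro a ha b hb α hαk
      rw [coeff_mul]
      refine Finset.sum_eq_zero fun p hp => ?_
      rw [Finset.HasAntidiagonal.mem_antidiagonal] at hp
      by_cases hg : p.2 = 0
      · have hb0 : coeff p.2 b = 0 := by rw [hg]; exact coeff_zero_of_mem_mId hb
        rw [hb0, mul_zero]
      · have h1 : 1 ≤ p.2.sum fun _ e => e := one_le_deg hg
        have h2 : ((p.1 + p.2).sum fun _ e => e) = (p.1.sum fun _ e => e) + p.2.sum fun _ e => e :=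
          degsum p.1 p.2
        rw [hp] at h2
        have : (p.1.sum fun _ e => e) < k := by omega
        rw [ih ha this, zero_mul]
    · intro x y hx hy α hαk
      rw [coeff_add, hx α hαk, hy α hαk, add_zero]

lemma monomial_one_mem_pow (α : Fin n →₀ ℕ) :
    (monomial α 1 : MvPolynomial (Fin n) ℂ) ∈ (mId n) ^ (α.sum fun _ e => e) := by
  induction α using Finsupp.induction with
  | zero => simp
  | single_add a b f haf hb ih =>
    have hs : ((Finsupp.single a b + f).sum fun _ e => e) = b + f.sum fun _ e => e := by
      rw [degsum, Finsupp.sum_single_index]; rfl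
    have h1 : (monomial (Finsupp.single a b + f) 1 : MvPolynomial (Fin n) ℂ)
        = (X a ^ b) * monomial f 1 := by
      rw [X_pow_eq_monomial, monomial_mul, one_mul]
    rw [hs, pow_add, h1]
    have hXa : (X a : MvPolynomial (Fin n) ℂ) ∈ mId n :=
      Ideal.subset_span (Set.mem_range_self a)
    exact Ideal.mul_mem_mul (Ideal.pow_mem_pow hXa b) ih

lemma monomial_mem_pow {k : ℕ} {α : Fin n →₀ ℕ} (h : k ≤ α.sum fun _ e => e) (c : ℂ) :
    (monomial α c : MvPolynomial (Fin n) ℂ) ∈ (mId n) ^ k := by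
  have h1 : (monomial α c : MvPolynomial (Fin n) ℂ) = C c * monomial α 1 := by
    rw [C_mul_monomial, mul_one]
  rw [h1]
  exact Ideal.mul_mem_left _ _ (Ideal.pow_le_pow_right h (monomial_one_mem_pow α))

lemma highpart_mem (N : ℕ) (f : MvPolynomial (Fin n) ℂ) :
    f - (∑ α ∈ f.support.filter (fun α => (α.sum fun _ e => e) < N),
      monomial α (coeff α f)) ∈ (mId n) ^ N := by
  have h2 := Finset.sum_filter_add_sum_filter_not f.support
    (fun α => (α.sum fun _ e => e) < N) (fun α => monomial α (coeff α f))
  rw [support_sum_monomial_coeff f] at h2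
  have h3 : f - (∑ α ∈ f.support.filter (fun α => (α.sum fun _ e => e) < N),
      monomial α (coeff α f))
      = ∑ α ∈ f.support.filter (fun α => ¬ (α.sum fun _ e => e) < N),
        monomial α (coeff α f) := by
    rw [sub_eq_iff_eq_add']; exact h2.symm
  rw [h3]
  refine Submodule.sum_mem _ fun α hα => ?_
  have := (Finset.mem_filter.mp hα).2
  exact monomial_mem_pow (by omega) _

lemma coeff_sum_monomial {S : Finset (Fin n →₀ ℕ)} (c : (Fin n →₀ ℕ) → ℂ)
    {α : Fin n →₀ ℕ} (hα : α ∈ S) :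
    coeff α (∑ γ ∈ S, monomial γ (c γ)) = c α := by
  rw [MvPolynomial.coeff_sum]
  rw [Finset.sum_eq_single α
    (fun β _ hβ => by rw [coeff_monomial, if_neg hβ])
    (fun h => (h hα).elim)]
  rw [coeff_monomial, if_pos rfl]

lemma support_sum_monomial_subset' (S : Finset (Fin n →₀ ℕ)) (c : (Fin n →₀ ℕ) → ℂ) :
    (∑ γ ∈ S, monomial γ (c γ)).support ⊆ S := by
  intro α hα
  by_contra h
  apply MvPolynomial.mem_support_iff.mp hα
  rw [MvPolynomial.coeff_sum]
  exact Finset.sum_eq_zero fun γ hγ => by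
    rw [coeff_monomial, if_neg (fun he => h (by rwa [← he]))]

lemma inf_sup_pow_le (I₁ I₂ : Ideal (MvPolynomial (Fin n) ℂ)) :
    ∃ c : ℕ, ∀ N : ℕ,
      (I₁ ⊔ (mId n) ^ (N + c)) ⊓ (I₂ ⊔ (mId n) ^ (N + c)) ≤ (I₁ ⊓ I₂) ⊔ (mId n) ^ N := by
  obtain ⟨c, hc⟩ := Ideal.exists_pow_inf_eq_pow_smul (mId n)
    ((I₁ ⊔ I₂ : Ideal (MvPolynomial (Fin n) ℂ)) : Submodule (MvPolynomial (Fin n) ℂ) (MvPolynomial (Fin n) ℂ))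
  refine ⟨c, fun N => ?_⟩
  have key : (mId n) ^ (N + c) ⊓ (I₁ ⊔ I₂) ≤ (I₁ ⊓ (mId n) ^ N) ⊔ (I₂ ⊓ (mId n) ^ N) := by
    have h1 := hc (N + c) (by omega)
    simp only [Ideal.smul_eq_mul, Ideal.mul_top, Nat.add_sub_cancel] at h1
    have h2 : (mId n) ^ (N + c) ⊓ (I₁ ⊔ I₂) ≤ (mId n) ^ N * (I₁ ⊔ I₂) := by
      rw [h1]; exact Ideal.mul_mono_right inf_le_right
    refine h2.trans ?_
    rw [Submodule.mul_sup]
    exact sup_le_sup (le_inf Ideal.mul_le_right Ideal.mul_le_left)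
      (le_inf Ideal.mul_le_right Ideal.mul_le_left)
  intro f hf
  obtain ⟨hf1, hf2⟩ := Submodule.mem_inf.mp hf
  obtain ⟨i₁, hi₁, u, hu, hfu⟩ := Submodule.mem_sup.mp hf1
  obtain ⟨i₂, hi₂, v, hv, hfv⟩ := Submodule.mem_sup.mp hf2
  have hsub : i₁ - i₂ ∈ (mId n) ^ (N + c) ⊓ (I₁ ⊔ I₂) := by
    refine Submodule.mem_inf.mpr ⟨?_, sub_mem (Submodule.mem_sup_left hi₁) (Submodule.mem_sup_right hi₂)⟩
    have he : i₁ - i₂ = v - u := by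
      have := hfu.trans hfv.symm
      linear_combination this
    rw [he]
    exact sub_mem hv hu
  obtain ⟨j₁, hj₁, j₂, hj₂, hj⟩ := Submodule.mem_sup.mp (key hsub)
  obtain ⟨hj₁I, hj₁m⟩ := Submodule.mem_inf.mp hj₁
  obtain ⟨hj₂I, hj₂m⟩ := Submodule.mem_inf.mp hj₂
  refine Submodule.mem_sup.mpr ⟨i₁ - j₁, ?_, u + j₁, ?_, by linear_combination hfu⟩
  · refine Submodule.mem_inf.mpr ⟨sub_mem hi₁ hj₁I, ?_⟩
    have he : i₁ - j₁ = i₂ + j₂ := by linear_combination hj.symm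
    rw [he]
    exact add_mem hi₂ hj₂I
  · exact add_mem (Ideal.pow_le_pow_right (by omega) hu) hj₁m

end Aux

/-- `D_0[I₁ ∩ I₂] = D_0[I₁] + D_0[I₂]`. -/
theorem dualSpace_inf (n : ℕ) (I₁ I₂ : Ideal (MvPolynomial (Fin n) ℂ)) :
    dualSpace (I₁ ⊓ I₂) = dualSpace I₁ + dualSpace I₂ := by
  rw [Submodule.add_eq_sup]
  apply le_antisymm
  swap
  · refine sup_le ?_ ?_
    · intro q hq f hf
      exact hq f (Submodule.mem_inf.mp hf).1
    · intro q hq f hf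
      exact hq f (Submodule.mem_inf.mp hf).2
  intro q hq
  obtain ⟨c, hc⟩ := inf_sup_pow_le I₁ I₂
  set d := q.totalDegree with hd
  set N := (d + 1) + c with hN
  set J₁ := I₁ ⊔ (mId n) ^ N with hJ₁
  set J₂ := I₂ ⊔ (mId n) ^ N with hJ₂
  -- q kills m^(d+1)
  have hqm : ∀ f ∈ (mId n) ^ (d + 1), apair q f = 0 := by
    intro f hf
    unfold apair
    refine Finset.sum_eq_zero fun α hα => ?_
    have hdeg : (α.sum fun _ e => e) ≤ d := MvPolynomial.le_totalDegree hα
    rw [coeff_eq_zero_of_mem_pow hf (by omega), mul_zero]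
  -- q kills J₁ ⊓ J₂
  have hqJ : ∀ f ∈ J₁ ⊓ J₂, apair q f = 0 := by
    intro f hf
    have hmem := hc (d + 1) hf
    obtain ⟨g, hg, h, hh, rfl⟩ := Submodule.mem_sup.mp hmem
    rw [apair_add_right, hq g hg, hqm h hh, add_zero]
  -- pass to the dual
  have hΦ : apairL q ∈ Submodule.dualAnnihilator
      ((J₁.restrictScalars ℂ) ⊓ (J₂.restrictScalars ℂ)) := by
    rw [Submodule.mem_dualAnnihilator]
    intro w hw
    obtain ⟨hw1, hw2⟩ := Submodule.mem_inf.mp hw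
    exact hqJ w (Submodule.mem_inf.mpr ⟨hw1, hw2⟩)
  rw [Subspace.dualAnnihilator_inf_eq] at hΦ
  obtain ⟨φ₁, hφ₁, φ₂, hφ₂, hφ⟩ := Submodule.mem_sup.mp hΦ
  rw [Submodule.mem_dualAnnihilator] at hφ₁ hφ₂
  -- finite set of low-degree exponents
  set β₀ : Fin n →₀ ℕ := Finsupp.equivFunOnFinite.symm fun _ => N with hβ₀
  set S : Finset (Fin n →₀ ℕ) := Finset.Iic β₀ with hS
  have hmemS : ∀ α : Fin n →₀ ℕ, (α.sum fun _ e => e) < N → α ∈ S := by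
    intro α hα
    rw [hS, Finset.mem_Iic, Finsupp.le_def]
    intro i
    have h1 : α i ≤ α.sum fun _ e => e := by
      by_cases h : α i = 0
      · simp [h]
      · exact Finset.single_le_sum (f := fun j => α j) (fun _ _ => Nat.zero_le _)
          (Finsupp.mem_support_iff.mpr h)
    have h2 : β₀ i = N := by simp [hβ₀]
    omega
  -- main computation
  have main : ∀ (φ : MvPolynomial (Fin n) ℂ →ₗ[ℂ] ℂ) (J : Ideal (MvPolynomial (Fin n) ℂ)),
      (∀ w ∈ J, φ w = 0) → (mId n) ^ N ≤ J →
      ∀ f, apair (∑ α ∈ S, monomial α (φ (monomial α 1))) f = φ f := by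
    intro φ J hφJ hNJ f
    set T := f.support.filter (fun α => (α.sum fun _ e => e) < N) with hT
    have hTS : T ⊆ S := fun α hα => hmemS α (Finset.mem_filter.mp hα).2
    have hlow : φ (∑ α ∈ T, monomial α (coeff α f)) = ∑ α ∈ T, φ (monomial α 1) * coeff α f := by
      rw [map_sum]
      refine Finset.sum_congr rfl fun α _ => ?_
      have he : (monomial α (coeff α f) : MvPolynomial (Fin n) ℂ)
          = (coeff α f) • monomial α 1 := by
        rw [smul_monomial, smul_eq_mul, mul_one]
      rw [he, map_smul, smul_eq_mul, mul_comm]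
    have hfφ : φ f = ∑ α ∈ T, φ (monomial α 1) * coeff α f := by
      have hsub := highpart_mem N f
      have h0 : φ (f - ∑ α ∈ T, monomial α (coeff α f)) = 0 := hφJ _ (hNJ hsub)
      rw [map_sub, sub_eq_zero] at h0
      rw [h0, hlow]
    rw [apair_eq_sum (support_sum_monomial_subset' S _) f, hfφ]
    have hcongr : (∑ α ∈ S, coeff α (∑ γ ∈ S, monomial γ (φ (monomial γ 1))) * coeff α f)
        = ∑ α ∈ S, φ (monomial α 1) * coeff α f :=
      Finset.sum_congr rfl fun α hα => by rw [coeff_sum_monomial _ hα]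
    rw [hcongr]
    symm
    refine Finset.sum_subset hTS fun α hαS hαT => ?_
    by_cases hc0 : coeff α f = 0
    · rw [hc0, mul_zero]
    · have hαf : α ∈ f.support := MvPolynomial.mem_support_iff.mpr hc0
      have hbig : ¬ ((α.sum fun _ e => e) < N) := fun hlt =>
        hαT (Finset.mem_filter.mpr ⟨hαf, hlt⟩)
      rw [hφJ _ (hNJ (monomial_mem_pow (by omega) 1)), zero_mul]
  set q₁ := ∑ α ∈ S, monomial α (φ₁ (monomial α 1)) with hq₁
  set q₂ := ∑ α ∈ S, monomial α (φ₂ (monomial α 1)) with hq₂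
  have hm1 := main φ₁ J₁ (fun w hw => hφ₁ w hw) le_sup_right
  have hm2 := main φ₂ J₂ (fun w hw => hφ₂ w hw) le_sup_right
  have hq1mem : q₁ ∈ dualSpace I₁ := by
    intro f hf
    rw [hm1 f]
    exact hφ₁ f (Submodule.mem_sup_left hf)
  have hq2mem : q₂ ∈ dualSpace I₂ := by
    intro f hf
    rw [hm2 f]
    exact hφ₂ f (Submodule.mem_sup_left hf)
  have hsum : q = q₁ + q₂ := by
    apply MvPolynomial.ext
    intro α
    rw [coeff_add]
    by_cases hα : α ∈ S
    · rw [hq₁, hq₂, coeff_sum_monomial _ hα, coeff_sum_monomial _ hα]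
      have h1 : φ₁ (monomial α 1) + φ₂ (monomial α 1) = apairL q (monomial α 1) := by
        have := LinearMap.congr_fun hφ (monomial α 1)
        rw [LinearMap.add_apply] at this
        exact this
      rw [h1]
      have h2 : apairL q (monomial α 1) = coeff α q := apair_monomial_one q α
      rw [h2]
    · have hdegα : ¬ ((α.sum fun _ e => e) < N) := fun hlt => hα (hmemS α hlt)
      have hcq : coeff α q = 0 := by
        apply MvPolynomial.coeff_eq_zero_of_totalDegree_lt
        have : (α.sum fun _ e => e) = ∑ i ∈ α.support, α i := rfl
        omega
      have hc1 : coeff α q₁ = 0 := by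
        rw [hq₁]
        exact MvPolynomial.notMem_support_iff.mp
          (fun hmem => hα (support_sum_monomial_subset' S _ hmem))
      have hc2 : coeff α q₂ = 0 := by
        rw [hq₂]
        exact MvPolynomial.notMem_support_iff.mp
          (fun hmem => hα (support_sum_monomial_subset' S _ hmem))
      rw [hcq, hc1, hc2, add_zero]
  exact Submodule.mem_sup.mpr ⟨q₁, hq1mem, q₂, hq2mem, hsum.symm⟩
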